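/- arXiv:2310.05662 — 4 statements merged into one kernel-verified Lean document; each statement's English description precedes it below -/
import Mathlib

section
/- Let ρ > 0, a > 0, l > 0 and ω ≠ 0 be real numbers, and set c = Real.sqrt (a/ρ). Then the matrix exponential of the 2×2 real matrix l • ![![0, 1/a], ![−ρ*ω^2, 0]] equals the layer transfer matrix ![![Real.cos (ω*l/c), Real.sin (ω*l/c) / (ω * Real.sqrt (ρ*a))], ![−ω * Real.sqrt (ρ*a) * Real.sin (ω*l/c), Real.cos (ω*l/c)]]. -/
set_option maxHeartbeats 1000000 in
open NormedSpace in
lemma exp_smul_of_sq_eq_neg_one (J : Matrix (Fin 2) (Fin 2) ℝ) (hJ : J * J = -1) (θ : ℝ) :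
    NormedSpace.exp (θ • J) = Real.cos θ • (1 : Matrix (Fin 2) (Fin 2) ℝ) + Real.sin θ • J := by
  letI : NormedRing (Matrix (Fin 2) (Fin 2) ℝ) := Matrix.linftyOpNormedRing
  letI : NormedAlgebra ℝ (Matrix (Fin 2) (Fin 2) ℝ) := Matrix.linftyOpNormedAlgebra
  set φ : ℂ →ₐ[ℝ] Matrix (Fin 2) (Fin 2) ℝ := Complex.liftAux J hJ
  have hφc : Continuous φ := φ.toLinearMap.continuous_of_finiteDimensional
  have h1 : θ • J = φ (θ • Complex.I) := by
    rw [map_smul, Complex.liftAux_apply_I]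
  have h2 : φ (exp (θ • Complex.I)) = exp (φ (θ • Complex.I)) :=
    map_exp φ hφc _
  have h3 : exp (θ • Complex.I) = Complex.exp (θ * Complex.I) := by
    rw [Complex.real_smul, ← Complex.exp_eq_exp_ℂ]
  rw [h1, ← h2, h3, Complex.exp_mul_I, ← Complex.ofReal_cos, ← Complex.ofReal_sin]
  have : ((Real.cos θ : ℂ)) + (Real.sin θ : ℂ) * Complex.I
      = Real.cos θ • (1 : ℂ) + Real.sin θ • Complex.I := by
    simp [Complex.real_smul]
  rw [this, map_add, map_smul, map_smul, map_one, Complex.liftAux_apply_I]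

/-- the matrix exponential of `l • ![![0, 1/a], ![−ρω², 0]]` is the
layer transfer matrix of a rod layer with density `ρ`, stiffness `a`, thickness `l`. -/
theorem layer_transfer_matrix_exp (ρ a l ω : ℝ) (hρ : 0 < ρ) (ha : 0 < a) (hl : 0 < l)
    (hω : ω ≠ 0) :
    NormedSpace.exp
        (l • (!![0, 1/a; -(ρ * ω^2), 0] : Matrix (Fin 2) (Fin 2) ℝ)) =
      !![Real.cos (ω * l / Real.sqrt (a / ρ)),
           Real.sin (ω * l / Real.sqrt (a / ρ)) / (ω * Real.sqrt (ρ * a));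
         -(ω * Real.sqrt (ρ * a)) * Real.sin (ω * l / Real.sqrt (a / ρ)),
           Real.cos (ω * l / Real.sqrt (a / ρ))] := by
  have hρa : (0:ℝ) < ρ * a := mul_pos hρ ha
  have hs : Real.sqrt (ρ * a) > 0 := Real.sqrt_pos.mpr hρa
  have hc : Real.sqrt (a / ρ) > 0 := Real.sqrt_pos.mpr (div_pos ha hρ)
  set θ : ℝ := ω * l / Real.sqrt (a / ρ)
  set J : Matrix (Fin 2) (Fin 2) ℝ :=
    !![0, 1 / (ω * Real.sqrt (ρ * a)); -(ω * Real.sqrt (ρ * a)), 0]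
  have hωs : ω * Real.sqrt (ρ * a) ≠ 0 := mul_ne_zero hω hs.ne'
  have hJ : J * J = -1 := by
    ext i j
    fin_cases i <;> fin_cases j <;>
      simp [J, Matrix.mul_apply, Fin.sum_univ_two, Matrix.one_apply] <;>
      field_simp <;> ring
  have hca : Real.sqrt (a / ρ) * Real.sqrt (ρ * a) = a := by
    rw [← Real.sqrt_mul (by positivity)]
    rw [show a / ρ * (ρ * a) = a ^ 2 by field_simp]
    exact Real.sqrt_sq ha.le
  have hcρ : Real.sqrt (ρ * a) = ρ * Real.sqrt (a / ρ) := by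
    rw [← Real.sqrt_sq hρ.le, ← Real.sqrt_mul (by positivity)]
    congr 1
    field_simp
    rw [Real.sq_sqrt (by positivity)]
  have hM : l • (!![0, 1/a; -(ρ * ω^2), 0] : Matrix (Fin 2) (Fin 2) ℝ) = θ • J := by
    ext i j
    fin_cases i <;> fin_cases j <;>
      simp [J, θ, Matrix.smul_apply]
    · field_simp
      rw [mul_comm a ρ]
      exact hca
    · rw [hcρ]
      field_simp
  rw [hM, exp_smul_of_sq_eq_neg_one J hJ θ]
  ext i j
  fin_cases i <;> fin_cases j <;>
    simp [J, Matrix.one_apply, div_eq_mul_inv, mul_comm]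
end

section
/- Let N ≥ 1, let ρ, a, l : Fin N → ℝ have all entries positive, set c_i = √(a_i/ρ_i), r_i(ω) = ω*l_i/c_i and ζ_i = √(ρ_i * a_i), and let η be the half-trace function of the cell. Suppose ω ∈ ℝ satisfies cos(r_i(ω)) ≠ 0 for every i. Then η(ω) = (∏_i cos(r_i(ω))) * Σ_{S ⊆ Fin N, |S| even} (−1)^{|S|/2} * γ_S * ∏_{i ∈ S} tan(r_i(ω)), where for S with increasing enumeration i_1 < i_2 < … < i_{2k}, γ_S = (1/2)*((∏_{j=1}^{k} ζ_{i_{2j}}/ζ_{i_{2j−1}}) + (∏_{j=1}^{k} ζ_{i_{2j−1}}/ζ_{i_{2j}})) (with γ_∅ = 1). -/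
open Finset

namespace HT

noncomputable def fF (t ζ : ℕ → ℝ) : Bool → ℕ → ℝ
  | false, i => t i * (ζ i)⁻¹
  | true, i => -(ζ i * t i)

noncomputable def wW (t ζ : ℕ → ℝ) (s : Bool) (T : Finset ℕ) : ℝ :=
  ∏ i ∈ T, fF t ζ (xor s (decide (Odd ((T.filter (· < i)).card)))) i

noncomputable def mM (t ζ : ℕ → ℝ) (i : ℕ) : Matrix (Fin 2) (Fin 2) ℝ :=
  !![1, t i * (ζ i)⁻¹; -(ζ i * t i), 1]

def b2f : Bool → Fin 2 := fun s => if s then 1 else 0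

lemma rank_card (T : Finset ℕ) :
    (T.filter fun i => Odd ((T.filter (· < i)).card)).card = T.card / 2 := by
  induction T using Finset.induction_on_max with
  | empty => simp
  | insert a s ha ih =>
    have has : a ∉ s := fun h => lt_irrefl a (ha a h)
    have h1 : ∀ i ∈ s, (insert a s).filter (· < i) = s.filter (· < i) := by
      intro i hi
      rw [Finset.filter_insert, if_neg (by exact fun h => absurd (ha i hi) (not_lt.2 h.le))]
    have h2 : (insert a s).filter (· < a) = s := by
      rw [Finset.filter_insert, if_neg (lt_irrefl a)]
      exact Finset.filter_true_of_mem ha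
    have hPQ : (s.filter fun i => Odd (((insert a s).filter (· < i)).card)) =
        s.filter fun i => Odd ((s.filter (· < i)).card) :=
      Finset.filter_congr (fun i hi => by rw [h1 i hi])
    have h3 : (insert a s).filter (fun i => Odd (((insert a s).filter (· < i)).card)) =
        if Odd s.card then insert a (s.filter fun i => Odd ((s.filter (· < i)).card))
        else s.filter fun i => Odd ((s.filter (· < i)).card) := by
      rw [Finset.filter_insert, h2, hPQ]
    rw [h3, Finset.card_insert_of_notMem has]
    rcases Nat.even_or_odd s.card with he | ho
    · rw [if_neg (Nat.not_odd_iff_even.mpr he), ih]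
      obtain ⟨k, hk⟩ := he; omega
    · rw [if_pos ho, Finset.card_insert_of_notMem (fun h => has (Finset.mem_filter.1 h).1), ih]
      obtain ⟨k, hk⟩ := ho; omega

lemma key (t ζ : ℕ → ℝ) (N : ℕ) (s s' : Bool) :
    ((List.range N).map (mM t ζ)).prod (b2f s) (b2f s') =
      ∑ T ∈ (Finset.range N).powerset,
        if xor s s' = decide (Odd T.card) then wW t ζ s T else 0 := by
  induction N generalizing s' with
  | zero =>
    simp only [List.range_zero, List.map_nil, List.prod_nil, Finset.range_zero,
      Finset.powerset_empty, Finset.sum_singleton]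
    cases s <;> cases s' <;> simp [b2f, Matrix.one_apply, wW]
  | succ n ih =>
    rw [List.range_succ, List.map_append, List.prod_append, List.map_singleton,
      List.prod_singleton, Matrix.mul_apply, Fin.sum_univ_two]
    have hn : (n : ℕ) ∉ Finset.range n := by simp
    rw [Finset.range_add_one, Finset.sum_powerset_insert hn]
    have e0 : (0 : Fin 2) = b2f false := rfl
    have e1 : (1 : Fin 2) = b2f true := rfl
    rw [e0, e1, ih false, ih true, Finset.sum_mul, Finset.sum_mul, ← Finset.sum_add_distrib, ← Finset.sum_add_distrib]
    refine Finset.sum_congr rfl (fun T hT => ?_)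
    have hTsub : T ⊆ Finset.range n := Finset.mem_powerset.1 hT
    have hnT : (n : ℕ) ∉ T := fun h => hn (hTsub h)
    have hlt : ∀ i ∈ T, i < n := fun i hi => Finset.mem_range.1 (hTsub hi)
    have hw : wW t ζ s (insert n T) =
        fF t ζ (xor s (decide (Odd T.card))) n * wW t ζ s T := by
      rw [wW, Finset.prod_insert hnT]
      have hfn : (insert n T).filter (· < n) = T := by
        rw [Finset.filter_insert, if_neg (lt_irrefl n)]
        exact Finset.filter_true_of_mem hlt
      rw [hfn]
      congr 1
      refine Finset.prod_congr rfl (fun i hi => ?_)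
      rw [Finset.filter_insert, if_neg (by exact fun h => absurd (hlt i hi) (not_lt.2 h.le))]
    rw [hw, Finset.card_insert_of_notMem hnT]
    by_cases hodd : Odd T.card
    · cases s <;> cases s' <;>
        simp [hodd, Nat.even_add_one, Nat.odd_add, ← Nat.not_odd_iff_even, b2f, mM, fF] <;> ring
    · cases s <;> cases s' <;>
        simp [hodd, Nat.even_add_one, ← Nat.not_odd_iff_even, b2f, mM, fF] <;> ring


lemma rank_card_not (T : Finset ℕ) (hT : Even T.card) :
    (T.filter fun i => ¬ Odd ((T.filter (· < i)).card)).card = T.card / 2 := by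
  have := Finset.card_filter_add_card_filter_not
    (s := T) (p := fun i => Odd ((T.filter (· < i)).card))
  rw [rank_card] at this
  obtain ⟨k, hk⟩ := hT
  omega

lemma wsum (t ζ : ℕ → ℝ) (T : Finset ℕ) (hT : Even T.card) :
    wW t ζ false T + wW t ζ true T =
      (-1:ℝ)^(T.card/2) *
        ((∏ i ∈ T, if Odd ((T.filter (· < i)).card) then ζ i else (ζ i)⁻¹) +
         (∏ i ∈ T, if Odd ((T.filter (· < i)).card) then (ζ i)⁻¹ else ζ i)) *
        ∏ i ∈ T, t i := by
  have h0 : wW t ζ false T =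
      (-1:ℝ)^(T.card/2) * (∏ i ∈ T, if Odd ((T.filter (· < i)).card) then ζ i else (ζ i)⁻¹) *
        ∏ i ∈ T, t i := by
    rw [wW]
    have : ∀ i ∈ T, fF t ζ (xor false (decide (Odd ((T.filter (· < i)).card)))) i =
        (if Odd ((T.filter (· < i)).card) then (-1:ℝ) else 1) *
        ((if Odd ((T.filter (· < i)).card) then ζ i else (ζ i)⁻¹) * t i) := by
      intro i _
      by_cases h : Odd ((T.filter (· < i)).card) <;> simp [h, fF] <;> ring
    rw [Finset.prod_congr rfl this, Finset.prod_mul_distrib, Finset.prod_mul_distrib,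
      Finset.prod_ite, Finset.prod_const, Finset.prod_const, one_pow, mul_one, rank_card]
    ring
  have h1 : wW t ζ true T =
      (-1:ℝ)^(T.card/2) * (∏ i ∈ T, if Odd ((T.filter (· < i)).card) then (ζ i)⁻¹ else ζ i) *
        ∏ i ∈ T, t i := by
    rw [wW]
    have : ∀ i ∈ T, fF t ζ (xor true (decide (Odd ((T.filter (· < i)).card)))) i =
        (if Odd ((T.filter (· < i)).card) then (1:ℝ) else -1) *
        ((if Odd ((T.filter (· < i)).card) then (ζ i)⁻¹ else ζ i) * t i) := by
      intro i _
      by_cases h : Odd ((T.filter (· < i)).card) <;> simp [h, fF] <;> ring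
    rw [Finset.prod_congr rfl this, Finset.prod_mul_distrib, Finset.prod_mul_distrib,
      Finset.prod_ite, Finset.prod_const, Finset.prod_const, one_pow, one_mul,
      rank_card_not T hT]
    ring
  rw [h0, h1]; ring

lemma trace_prod (t ζ : ℕ → ℝ) (N : ℕ) :
    Matrix.trace ((List.range N).map (mM t ζ)).prod =
      ∑ T ∈ (Finset.range N).powerset,
        if Even T.card then wW t ζ false T + wW t ζ true T else 0 := by
  have e0 : (0 : Fin 2) = b2f false := rfl
  have e1 : (1 : Fin 2) = b2f true := rfl
  rw [Matrix.trace_fin_two, e0, e1, key, key, ← Finset.sum_add_distrib]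
  refine Finset.sum_congr rfl (fun T _ => ?_)
  by_cases h : Odd T.card <;>
    simp [h, ← Nat.not_odd_iff_even]

lemma ofFn_prod {M : Type*} [Monoid M] (N : ℕ) (G : Fin N → M) (G' : ℕ → M)
    (h : ∀ i : Fin N, G' i.val = G i) :
    (List.ofFn G).prod = ((List.range N).map G').prod := by
  induction N with
  | zero => simp
  | succ n ih =>
    rw [List.ofFn_succ', List.prod_concat, List.range_succ, List.map_append,
      List.prod_append, List.map_singleton, List.prod_singleton,
      ih (fun i => G i.castSucc) (fun i => h i.castSucc)]
    exact congrArg _ (h (Fin.last n)).symm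

lemma smul_list_prod {M : Type*} [Monoid M] [AddCommMonoid M] [Module ℝ M]
    [IsScalarTower ℝ M M] [SMulCommClass ℝ M M] (N : ℕ) (c : ℕ → ℝ) (A : ℕ → M) :
    ((List.range N).map (fun i => c i • A i)).prod =
      (∏ i ∈ Finset.range N, c i) • ((List.range N).map A).prod := by
  induction N with
  | zero => simp
  | succ n ih =>
    rw [List.range_succ, List.map_append, List.prod_append, List.map_singleton,
      List.prod_singleton, List.map_append, List.prod_append, List.map_singleton,
      List.prod_singleton, ih, Finset.prod_range_succ, smul_mul_assoc, mul_smul_comm,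
      smul_smul]

lemma conj (t ζ : ℕ → ℝ) (ω : ℝ) (hω : ω ≠ 0) (N : ℕ) :
    !![ω,0;0,(1:ℝ)] * ((List.range N).map (mM t (fun i => ω * ζ i))).prod =
      ((List.range N).map (mM t ζ)).prod * !![ω,0;0,(1:ℝ)] := by
  induction N with
  | zero => simp
  | succ n ih =>
    have hlayer : !![ω,0;0,(1:ℝ)] * mM t (fun i => ω * ζ i) n = mM t ζ n * !![ω,0;0,(1:ℝ)] := by
      ext i j
      fin_cases i <;> fin_cases j <;>
        simp [mM, Matrix.mul_apply, Fin.sum_univ_two, mul_inv]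
      · rw [show ω * (t n * ((ζ n)⁻¹ * ω⁻¹)) = ω * ω⁻¹ * (t n * (ζ n)⁻¹) by ring,
          mul_inv_cancel₀ hω, one_mul]
      · ring
    rw [List.range_succ, List.map_append, List.prod_append, List.map_singleton,
      List.prod_singleton, List.map_append, List.prod_append, List.map_singleton,
      List.prod_singleton, ← mul_assoc, ih, mul_assoc, hlayer, ← mul_assoc]

lemma trace_conj (t ζ : ℕ → ℝ) (ω : ℝ) (hω : ω ≠ 0) (N : ℕ) :
    Matrix.trace ((List.range N).map (mM t (fun i => ω * ζ i))).prod =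
      Matrix.trace ((List.range N).map (mM t ζ)).prod := by
  have hDD : !![ω⁻¹,0;0,(1:ℝ)] * !![ω,0;0,(1:ℝ)] = 1 := by
    rw [Matrix.one_fin_two]
    ext i j
    fin_cases i <;> fin_cases j <;>
      simp [Matrix.mul_apply, Fin.sum_univ_two, inv_mul_cancel₀ hω]
  have hDD' : !![ω,0;0,(1:ℝ)] * !![ω⁻¹,0;0,(1:ℝ)] = 1 := by
    rw [Matrix.one_fin_two]
    ext i j
    fin_cases i <;> fin_cases j <;>
      simp [Matrix.mul_apply, Fin.sum_univ_two, mul_inv_cancel₀ hω]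
  have h1 : ((List.range N).map (mM t (fun i => ω * ζ i))).prod =
      !![ω⁻¹,0;0,(1:ℝ)] * (((List.range N).map (mM t ζ)).prod * !![ω,0;0,(1:ℝ)]) := by
    rw [← conj t ζ ω hω N, ← mul_assoc, hDD, one_mul]
  rw [h1, Matrix.trace_mul_comm, mul_assoc, hDD', mul_one]

end HT


/-- Layer transfer matrix of a rod layer with linear density `ρ`, axial stiffness `a`,
thickness `l`, at circular frequency `ω` (Lean's division-by-zero convention makes
`layerT ρ a l 0 = 1`). -/
noncomputable def layerT (ρ a l ω : ℝ) : Matrix (Fin 2) (Fin 2) ℝ :=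
  !![Real.cos (ω * l / Real.sqrt (a / ρ)),
       Real.sin (ω * l / Real.sqrt (a / ρ)) / (ω * Real.sqrt (ρ * a));
     -(ω * Real.sqrt (ρ * a)) * Real.sin (ω * l / Real.sqrt (a / ρ)),
       Real.cos (ω * l / Real.sqrt (a / ρ))]

/-- Half-trace function of the `N`-layer unit cell described by `ρ`, `a`, `l`. -/
noncomputable def halfTrace (N : ℕ) (ρ a l : Fin N → ℝ) (ω : ℝ) : ℝ :=
  (1/2) * Matrix.trace (List.ofFn (fun i => layerT (ρ i) (a i) (l i) ω)).prod

/-- The impedance coefficient `γ_S`: for `S` with increasing enumeration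
`i₁ < i₂ < … < i_{2k}` (the elements of odd rank `1, 3, …` in `S` being `i₂, i₄, …`),
`γ_S = (1/2) * ((∏_j ζ_{i_{2j}}/ζ_{i_{2j-1}}) + (∏_j ζ_{i_{2j-1}}/ζ_{i_{2j}}))`,
with `γ_∅ = 1`. -/
noncomputable def gam {N : ℕ} (ζ : Fin N → ℝ) (S : Finset (Fin N)) : ℝ :=
  (1/2) * ((∏ i ∈ S, if Odd (S.filter (· < i)).card then ζ i else (ζ i)⁻¹) +
           (∏ i ∈ S, if Odd (S.filter (· < i)).card then (ζ i)⁻¹ else ζ i))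

/-- closed form of the half-trace function, when all cosines are nonzero:
`η(ω) = (∏ᵢ cos rᵢ) * Σ_{S even} (−1)^{|S|/2} γ_S ∏_{i∈S} tan rᵢ`. -/
theorem halfTrace_eq_cos_prod_mul_sum (N : ℕ) (hN : 1 ≤ N) (ρ a l : Fin N → ℝ)
    (hρ : ∀ i, 0 < ρ i) (ha : ∀ i, 0 < a i) (hl : ∀ i, 0 < l i) (ω : ℝ)
    (hcos : ∀ i, Real.cos (ω * l i / Real.sqrt (a i / ρ i)) ≠ 0) :
    halfTrace N ρ a l ω =
      (∏ i, Real.cos (ω * l i / Real.sqrt (a i / ρ i))) *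
        ∑ S ∈ Finset.univ.filter (fun S : Finset (Fin N) => Even S.card),
          (-1 : ℝ)^(S.card / 2) * gam (fun i => Real.sqrt (ρ i * a i)) S *
            ∏ i ∈ S, Real.tan (ω * l i / Real.sqrt (a i / ρ i)) := by
  classical
  set t' : ℕ → ℝ := fun n =>
    if h : n < N then Real.tan (ω * l ⟨n,h⟩ / Real.sqrt (a ⟨n,h⟩ / ρ ⟨n,h⟩)) else 0 with ht'
  set ζ' : ℕ → ℝ := fun n =>
    if h : n < N then Real.sqrt (ρ ⟨n,h⟩ * a ⟨n,h⟩) else 1 with hζ'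
  set c' : ℕ → ℝ := fun n =>
    if h : n < N then Real.cos (ω * l ⟨n,h⟩ / Real.sqrt (a ⟨n,h⟩ / ρ ⟨n,h⟩)) else 1 with hc'
  have hsin : ∀ i : Fin N, Real.sin (ω * l i / Real.sqrt (a i / ρ i)) =
      Real.cos (ω * l i / Real.sqrt (a i / ρ i)) *
        Real.tan (ω * l i / Real.sqrt (a i / ρ i)) := by
    intro i
    rw [Real.tan_eq_sin_div_cos, ← mul_div_assoc, mul_div_cancel_left₀ _ (hcos i)]
  have smul2 : ∀ (c x y z w : ℝ), c • !![x, y; z, w] = !![c*x, c*y; c*z, c*w] := by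
    intro c x y z w
    ext i j
    fin_cases i <;> fin_cases j <;> simp
  -- Step A: layer decomposition
  have hG : ∀ i : Fin N, (fun n => c' n • HT.mM t' (fun m => ω * ζ' m) n) i.val
      = layerT (ρ i) (a i) (l i) ω := by
    intro i
    have hti : t' i.val = Real.tan (ω * l i / Real.sqrt (a i / ρ i)) := by
      rw [ht']; simp
    have hζi : ζ' i.val = Real.sqrt (ρ i * a i) := by
      rw [hζ']; simp
    have hci : c' i.val = Real.cos (ω * l i / Real.sqrt (a i / ρ i)) := by
      rw [hc']; simp
    have e01 : Real.cos (ω * l i / Real.sqrt (a i / ρ i)) *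
        (Real.tan (ω * l i / Real.sqrt (a i / ρ i)) * (ω * Real.sqrt (ρ i * a i))⁻¹) =
        Real.sin (ω * l i / Real.sqrt (a i / ρ i)) / (ω * Real.sqrt (ρ i * a i)) := by
      rw [hsin i, div_eq_mul_inv]; ring
    have e10 : Real.cos (ω * l i / Real.sqrt (a i / ρ i)) *
        -(ω * Real.sqrt (ρ i * a i) * Real.tan (ω * l i / Real.sqrt (a i / ρ i))) =
        -(ω * Real.sqrt (ρ i * a i)) * Real.sin (ω * l i / Real.sqrt (a i / ρ i)) := by
      rw [hsin i]; ring
    show c' i.val • HT.mM t' (fun m => ω * ζ' m) i.val = layerT (ρ i) (a i) (l i) ω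
    rw [HT.mM, hti, hζi, hci, smul2, e01, e10, mul_one, layerT]
  -- Step B
  have hB : halfTrace N ρ a l ω =
      (∏ i, Real.cos (ω * l i / Real.sqrt (a i / ρ i))) *
        ((1/2) * Matrix.trace ((List.range N).map (HT.mM t' ζ')).prod) := by
    have hofn := HT.ofFn_prod N (fun i : Fin N => layerT (ρ i) (a i) (l i) ω)
      (fun n => c' n • HT.mM t' (fun m => ω * ζ' m) n) hG
    rw [halfTrace, hofn, HT.smul_list_prod, Matrix.trace_smul]
    have hprodc : (∏ n ∈ Finset.range N, c' n) =
        ∏ i, Real.cos (ω * l i / Real.sqrt (a i / ρ i)) := by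
      rw [← Fin.prod_univ_eq_prod_range c' N]
      exact Finset.prod_congr rfl (fun i _ => by rw [hc']; simp only [dif_pos i.isLt, Fin.eta])
    have htr : Matrix.trace ((List.range N).map (HT.mM t' (fun m => ω * ζ' m))).prod =
        Matrix.trace ((List.range N).map (HT.mM t' ζ')).prod := by
      by_cases hω : ω = 0
      · subst hω
        have : ∀ n, HT.mM t' (fun m => (0:ℝ) * ζ' m) n = HT.mM t' ζ' n := by
          intro n
          have ht0 : t' n = 0 := by
            rw [ht']
            by_cases h : n < N
            · simp only [dif_pos h]
              simp
            · simp only [dif_neg h]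
          rw [HT.mM, HT.mM, ht0]
          norm_num
        rw [show HT.mM t' (fun m => (0:ℝ) * ζ' m) = HT.mM t' ζ' from funext this]
      · exact HT.trace_conj t' ζ' ω hω N
    rw [htr, hprodc, smul_eq_mul]
    ring
  rw [hB]
  congr 1
  rw [HT.trace_prod]
  -- bridge sums
  have htv : ∀ i : Fin N, t' (i : ℕ) = Real.tan (ω * l i / Real.sqrt (a i / ρ i)) := by
    intro i; simp only [ht']; rw [dif_pos i.isLt]
  have hζv : ∀ i : Fin N, ζ' (i : ℕ) = Real.sqrt (ρ i * a i) := by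
    intro i; simp only [hζ']; rw [dif_pos i.isLt]
  have hfc : ∀ (S : Finset (Fin N)) (i : Fin N),
      ((S.map Fin.valEmbedding).filter (· < (i : ℕ))).card = (S.filter (· < i)).card := by
    intro S i
    rw [Finset.filter_map, Finset.card_map]
    congr 1
  have hfiltermap : ∀ S : Finset (Fin N),
      Finset.univ.filter (fun i : Fin N => (i : ℕ) ∈ S.map Fin.valEmbedding) = S := by
    intro S
    ext i
    simp [Fin.val_inj]
  have hmapfilter : ∀ T ∈ ((Finset.range N).powerset).filter (fun T => Even T.card),
      (Finset.univ.filter (fun i : Fin N => (i : ℕ) ∈ T)).map Fin.valEmbedding = T := by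
    intro T hT
    have hsub : T ⊆ Finset.range N := Finset.mem_powerset.1 (Finset.mem_filter.1 hT).1
    ext n
    simp only [Finset.mem_map, Finset.mem_filter, Finset.mem_univ, true_and,
      Fin.valEmbedding_apply]
    constructor
    · rintro ⟨i, hi, rfl⟩; exact hi
    · intro hn
      exact ⟨⟨n, Finset.mem_range.1 (hsub hn)⟩, hn, rfl⟩
  rw [← Finset.sum_filter, Finset.mul_sum]
  refine Finset.sum_nbij' (fun T => Finset.univ.filter (fun i : Fin N => (i : ℕ) ∈ T))
    (fun S => S.map Fin.valEmbedding) ?_ ?_ ?_ ?_ ?_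
  · intro T hT
    have h1 := hmapfilter T hT
    have h2 := congrArg Finset.card h1
    rw [Finset.card_map] at h2
    simp only [Finset.mem_filter, Finset.mem_univ, true_and]
    rw [h2]
    exact (Finset.mem_filter.1 hT).2
  · intro S hS
    simp only [Finset.mem_filter, Finset.mem_powerset]
    refine ⟨fun n hn => ?_, ?_⟩
    · obtain ⟨i, _, rfl⟩ := Finset.mem_map.1 hn
      exact Finset.mem_range.2 i.isLt
    · rw [Finset.card_map]
      exact (Finset.mem_filter.1 hS).2
  · exact hmapfilter
  · intro S _
    exact hfiltermap S
  · intro T hT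
    have hEvenT : Even T.card := (Finset.mem_filter.1 hT).2
    set S := Finset.univ.filter (fun i : Fin N => (i : ℕ) ∈ T) with hS
    have hmapS : S.map Fin.valEmbedding = T := hmapfilter T hT
    rw [HT.wsum t' ζ' T hEvenT, ← hmapS, Finset.card_map, Finset.prod_map, Finset.prod_map,
      Finset.prod_map]
    have hA : (∏ i ∈ S, if Odd (((S.map Fin.valEmbedding).filter
          (· < (Fin.valEmbedding i : ℕ))).card) then ζ' (Fin.valEmbedding i)
          else (ζ' (Fin.valEmbedding i))⁻¹) =
        ∏ i ∈ S, (if Odd ((S.filter (· < i)).card) then Real.sqrt (ρ i * a i)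
          else (Real.sqrt (ρ i * a i))⁻¹) :=
      Finset.prod_congr rfl (fun i _ => by rw [Fin.valEmbedding_apply, hfc, hζv])
    have hB2 : (∏ i ∈ S, if Odd (((S.map Fin.valEmbedding).filter
          (· < (Fin.valEmbedding i : ℕ))).card) then (ζ' (Fin.valEmbedding i))⁻¹
          else ζ' (Fin.valEmbedding i)) =
        ∏ i ∈ S, (if Odd ((S.filter (· < i)).card) then (Real.sqrt (ρ i * a i))⁻¹
          else Real.sqrt (ρ i * a i)) :=
      Finset.prod_congr rfl (fun i _ => by rw [Fin.valEmbedding_apply, hfc, hζv])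
    have hTt : (∏ i ∈ S, t' (Fin.valEmbedding i)) =
        ∏ i ∈ S, Real.tan (ω * l i / Real.sqrt (a i / ρ i)) :=
      Finset.prod_congr rfl (fun i _ => by rw [Fin.valEmbedding_apply, htv])
    rw [hA, hB2, hTt, gam]
    ring
end

section
/- Let N ≥ 1 and let ρ, a, l : Fin N → ℝ have all entries positive, and let η be the half-trace function of the cell. Then the second derivative of η at the origin equals minus the curvature κ = (Σ_i l_i*ρ_i) * (Σ_i l_i/a_i); that is, iteratedDeriv 2 η 0 = −(Σ_i l_i*ρ_i) * (Σ_i l_i/a_i). -/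
namespace HalfTraceAux

open Matrix

abbrev M2 := Matrix (Fin 2) (Fin 2) ℝ

attribute [local instance] Matrix.linftyOpNormedRing Matrix.linftyOpNormedAlgebra

noncomputable def Am (t : ℝ) (J : M2) (ω : ℝ) : M2 :=
  Real.cos (t * ω) • (1 : M2) + Real.sin (t * ω) • J

noncomputable def Am' (t : ℝ) (J : M2) (ω : ℝ) : M2 :=
  (-(t * Real.sin (t * ω))) • (1 : M2) + (t * Real.cos (t * ω)) • J

noncomputable def Pl (L : List (ℝ × M2)) (ω : ℝ) : M2 :=
  (L.map fun p => Am p.1 p.2 ω).prod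

noncomputable def DPl : List (ℝ × M2) → ℝ → M2
  | [], _ => 0
  | p :: L, ω => Am' p.1 p.2 ω * Pl L ω + Am p.1 p.2 ω * DPl L ω

noncomputable def Bsum (L : List (ℝ × M2)) : M2 := (L.map fun p => p.1 • p.2).sum

noncomputable def El : List (ℝ × M2) → M2
  | [] => 0
  | p :: L => (-(p.1 * p.1)) • (1 : M2) + (2 : ℝ) • ((p.1 • p.2) * Bsum L) + El L

lemma Am_zero (t : ℝ) (J : M2) : Am t J 0 = 1 := by simp [Am]

lemma Am'_zero (t : ℝ) (J : M2) : Am' t J 0 = t • J := by simp [Am']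

lemma hasDerivAt_cos_mul (t ω : ℝ) :
    HasDerivAt (fun ω => Real.cos (t * ω)) (-(t * Real.sin (t * ω))) ω := by
  simpa [mul_comm, Function.comp_def] using (Real.hasDerivAt_cos (t * ω)).comp ω ((hasDerivAt_id ω).const_mul t)

lemma hasDerivAt_sin_mul (t ω : ℝ) :
    HasDerivAt (fun ω => Real.sin (t * ω)) (t * Real.cos (t * ω)) ω := by
  simpa [mul_comm, Function.comp_def] using (Real.hasDerivAt_sin (t * ω)).comp ω ((hasDerivAt_id ω).const_mul t)

lemma hasDerivAt_Am (t : ℝ) (J : M2) (ω : ℝ) :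
    HasDerivAt (Am t J) (Am' t J ω) ω :=
  ((hasDerivAt_cos_mul t ω).smul_const _).add ((hasDerivAt_sin_mul t ω).smul_const _)

lemma hasDerivAt_Am'_zero (t : ℝ) (J : M2) :
    HasDerivAt (Am' t J) ((-(t * t)) • (1 : M2)) 0 := by
  have h1 : HasDerivAt (fun ω => -(t * Real.sin (t * ω))) (-(t * (t * Real.cos (t * 0)))) 0 :=
    (((hasDerivAt_sin_mul t 0).const_mul t).neg)
  have h2 : HasDerivAt (fun ω => t * Real.cos (t * ω)) (t * -(t * Real.sin (t * 0))) 0 :=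
    ((hasDerivAt_cos_mul t 0).const_mul t)
  have h := (h1.smul_const (1 : M2)).add (h2.smul_const J)
  have h' : HasDerivAt (Am' t J)
      ((-(t * (t * Real.cos (t * 0)))) • (1 : M2) + (t * -(t * Real.sin (t * 0))) • J) 0 := h
  simpa using h'

lemma Pl_cons (p : ℝ × M2) (L : List (ℝ × M2)) (ω : ℝ) :
    Pl (p :: L) ω = Am p.1 p.2 ω * Pl L ω := by simp [Pl]

lemma Pl_zero (L : List (ℝ × M2)) : Pl L 0 = 1 := by
  induction L with
  | nil => simp [Pl]
  | cons p L ih => rw [Pl_cons, Am_zero, ih, one_mul]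

lemma hasDerivAt_Pl (L : List (ℝ × M2)) (ω : ℝ) :
    HasDerivAt (Pl L) (DPl L ω) ω := by
  induction L with
  | nil =>
    rw [show Pl [] = fun _ => (1 : M2) from funext fun _ => by simp [Pl]]
    simp only [DPl]
    exact hasDerivAt_const ω (1 : M2)
  | cons p L ih =>
    have hfun : Pl (p :: L) = fun ω => Am p.1 p.2 ω * Pl L ω :=
      funext fun ω => Pl_cons p L ω
    rw [hfun]
    exact (hasDerivAt_Am p.1 p.2 ω).mul ih

lemma DPl_zero (L : List (ℝ × M2)) : DPl L 0 = Bsum L := by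
  induction L with
  | nil => simp [DPl, Bsum]
  | cons p L ih => simp [DPl, Bsum, Am_zero, Am'_zero, Pl_zero, ih]

lemma hasDerivAt_DPl_zero (L : List (ℝ × M2)) :
    HasDerivAt (DPl L) (El L) 0 := by
  induction L with
  | nil =>
    rw [show DPl [] = fun _ => (0 : M2) from funext fun _ => by simp [DPl]]
    simp only [El]
    exact hasDerivAt_const (0:ℝ) (0 : M2)
  | cons p L ih =>
    have h1 := (hasDerivAt_Am'_zero p.1 p.2).mul (hasDerivAt_Pl L 0)
    have h2 := (hasDerivAt_Am p.1 p.2 0).mul ih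
    have h := h1.add h2
    have hfun : (Am' p.1 p.2 * Pl L + Am p.1 p.2 * DPl L) = DPl (p :: L) := by
      funext ω; simp [DPl]
    rw [hfun] at h
    refine h.congr_deriv ?_
    rw [Pl_zero, DPl_zero, Am_zero, Am'_zero]
    simp only [El, mul_one, one_mul, two_smul]
    abel

noncomputable def lay (q : ℝ × ℝ × ℝ) : ℝ × M2 :=
  (q.2.2 / Real.sqrt (q.2.1 / q.1),
    !![0, 1 / Real.sqrt (q.1 * q.2.1); -Real.sqrt (q.1 * q.2.1), 0])

noncomputable def Xl (L : List (ℝ × ℝ × ℝ)) : ℝ := (L.map fun q => q.2.2 * q.1).sum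
noncomputable def Yl (L : List (ℝ × ℝ × ℝ)) : ℝ := (L.map fun q => q.2.2 / q.2.1).sum

lemma sqrt_mul_sqrt (ρ A : ℝ) (hρ : 0 < ρ) (hA : 0 < A) :
    Real.sqrt (ρ * A) = ρ * Real.sqrt (A / ρ) := by
  rw [show ρ * Real.sqrt (A / ρ) = Real.sqrt (ρ ^ 2) * Real.sqrt (A / ρ) by
        rw [Real.sqrt_sq hρ.le],
      ← Real.sqrt_mul (by positivity)]
  congr 1
  field_simp

lemma smul_lay (ρ A ℓ : ℝ) (hρ : 0 < ρ) (hA : 0 < A) :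
    (lay (ρ, A, ℓ)).1 • (lay (ρ, A, ℓ)).2 = !![0, ℓ / A; -(ℓ * ρ), 0] := by
  have hc : 0 < Real.sqrt (A / ρ) := Real.sqrt_pos.2 (by positivity)
  have hz : Real.sqrt (ρ * A) = ρ * Real.sqrt (A / ρ) := sqrt_mul_sqrt ρ A hρ hA
  have hc2 : Real.sqrt (A / ρ) * Real.sqrt (A / ρ) = A / ρ :=
    Real.mul_self_sqrt (by positivity)
  ext i j
  fin_cases i <;> fin_cases j <;>
    simp [lay, hz, smul_eq_mul, Matrix.smul_apply]
  · have hA' : A = Real.sqrt (A / ρ) * Real.sqrt (A / ρ) * ρ := by rw [hc2]; field_simp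
    rw [div_eq_mul_inv, mul_assoc, ← mul_assoc (Real.sqrt (A / ρ))⁻¹, ← mul_inv, hc2]
    field_simp
  · field_simp

lemma t_sq (ρ A ℓ : ℝ) (hρ : 0 < ρ) (hA : 0 < A) :
    (lay (ρ, A, ℓ)).1 * (lay (ρ, A, ℓ)).1 = (ℓ * ρ) * (ℓ / A) := by
  have hc : 0 < Real.sqrt (A / ρ) := Real.sqrt_pos.2 (by positivity)
  have hc2 : Real.sqrt (A / ρ) * Real.sqrt (A / ρ) = A / ρ :=
    Real.mul_self_sqrt (by positivity)
  simp only [lay]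
  rw [div_mul_div_comm, hc2]
  rw [div_eq_iff (by positivity)]
  field_simp

lemma Bsum_lay (L : List (ℝ × ℝ × ℝ)) (hpos : ∀ q ∈ L, 0 < q.1 ∧ 0 < q.2.1) :
    Bsum (L.map lay) = !![0, Yl L; -(Xl L), 0] := by
  induction L with
  | nil =>
    simp [Bsum, Xl, Yl]
    ext i j; fin_cases i <;> fin_cases j <;> simp
  | cons q L ih =>
    have hq := hpos q List.mem_cons_self
    have ih' := ih fun p hp => hpos p (List.mem_cons_of_mem q hp)
    have hsl := smul_lay q.1 q.2.1 q.2.2 hq.1 hq.2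
    simp only [List.map_cons, Bsum, List.sum_cons] at *
    rw [show (q.1, q.2.1, q.2.2) = q from rfl] at hsl
    rw [hsl, ih']
    ext i j; fin_cases i <;> fin_cases j <;> simp [Xl, Yl] <;> ring

lemma trace_El (L : List (ℝ × ℝ × ℝ)) (hpos : ∀ q ∈ L, 0 < q.1 ∧ 0 < q.2.1) :
    Matrix.trace (El (L.map lay)) = -(2 * (Xl L * Yl L)) := by
  induction L with
  | nil => simp [El, Xl, Yl]
  | cons q L ih =>
    have hq := hpos q List.mem_cons_self
    have ih' := ih fun p hp => hpos p (List.mem_cons_of_mem q hp)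
    have hsl := smul_lay q.1 q.2.1 q.2.2 hq.1 hq.2
    have hts := t_sq q.1 q.2.1 q.2.2 hq.1 hq.2
    rw [show (q.1, q.2.1, q.2.2) = q from rfl] at hsl hts
    simp only [List.map_cons, El]
    rw [Bsum_lay L (fun p hp => hpos p (List.mem_cons_of_mem q hp)), hsl, hts]
    rw [Matrix.trace_add, Matrix.trace_add, Matrix.trace_smul, Matrix.trace_smul,
      Matrix.trace_one, Matrix.mul_fin_two, ih']
    simp only [Matrix.trace_fin_two_of, smul_eq_mul, Fintype.card_fin, Nat.cast_ofNat]
    have hX : Xl (q :: L) = q.2.2 * q.1 + Xl L := by simp [Xl]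
    have hY : Yl (q :: L) = q.2.2 / q.2.1 + Yl L := by simp [Yl]
    rw [hX, hY]
    ring

noncomputable def Dm (ω : ℝ) : M2 := !![1, 0; 0, ω]

lemma Dm_mul_Dm_inv (ω : ℝ) (hω : ω ≠ 0) : Dm ω * Dm ω⁻¹ = 1 := by
  ext i j; fin_cases i <;> fin_cases j <;>
    simp [Dm, Matrix.mul_apply, Fin.sum_univ_two, Matrix.one_apply, mul_inv_cancel₀ hω]

lemma Dm_inv_mul_Dm (ω : ℝ) (hω : ω ≠ 0) : Dm ω⁻¹ * Dm ω = 1 := by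
  ext i j; fin_cases i <;> fin_cases j <;>
    simp [Dm, Matrix.mul_apply, Fin.sum_univ_two, Matrix.one_apply, inv_mul_cancel₀ hω]

lemma layerT_zero (ρ a l : ℝ) : layerT ρ a l 0 = 1 := by
  ext i j; fin_cases i <;> fin_cases j <;> simp [layerT, Matrix.one_apply]

lemma Am_apply (t z ω : ℝ) :
    Am t !![0, 1 / z; -z, 0] ω =
      !![Real.cos (t * ω), Real.sin (t * ω) / z; -(z * Real.sin (t * ω)), Real.cos (t * ω)] := by
  ext i j; fin_cases i <;> fin_cases j <;>
    simp [Am, Matrix.one_apply, mul_one_div, mul_comm] <;> ring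

lemma layerT_conj (ρ a l ω : ℝ) (hω : ω ≠ 0) :
    layerT ρ a l ω = Dm ω * Am (lay (ρ, a, l)).1 (lay (ρ, a, l)).2 ω * Dm ω⁻¹ := by
  have harg : (lay (ρ, a, l)).1 * ω = ω * l / Real.sqrt (a / ρ) := by
    simp only [lay]; ring
  rw [show (lay (ρ, a, l)).2 = !![0, 1 / Real.sqrt (ρ * a); -Real.sqrt (ρ * a), 0] from rfl,
    Am_apply, harg]
  ext i j; fin_cases i <;> fin_cases j <;>
    simp [layerT, Dm, Matrix.mul_apply, Fin.sum_univ_two]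
  all_goals try field_simp
  all_goals ring

lemma conj_prod (D Dinv : M2) (h1 : D * Dinv = 1) (h2 : Dinv * D = 1) (L : List M2) :
    (L.map fun X => D * X * Dinv).prod = D * L.prod * Dinv := by
  have key : ∀ m : M2, Dinv * (D * m) = m := fun m => by rw [← mul_assoc, h2, one_mul]
  induction L with
  | nil => simp [h1]
  | cons X L ih => simp only [List.map_cons, List.prod_cons, ih]; simp [mul_assoc, key]

lemma trace_conj (D Dinv X : M2) (h2 : Dinv * D = 1) :
    Matrix.trace (D * X * Dinv) = Matrix.trace X := by
  rw [Matrix.trace_mul_comm, ← mul_assoc, h2, one_mul]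

noncomputable def trCLM : M2 →L[ℝ] ℝ :=
  LinearMap.toContinuousLinearMap (Matrix.traceLinearMap (Fin 2) ℝ ℝ)

lemma hasDerivAt_trace {f : ℝ → M2} {f' : M2} {x : ℝ} (h : HasDerivAt f f' x) :
    HasDerivAt (fun ω => Matrix.trace (f ω)) (Matrix.trace f') x := by
  have := (trCLM.hasFDerivAt (x := f x)).comp_hasDerivAt x h
  exact this

lemma key (N : ℕ) (ρ a l : Fin N → ℝ)
    (hρ : ∀ i, 0 < ρ i) (ha : ∀ i, 0 < a i) (hl : ∀ i, 0 < l i) :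
    iteratedDeriv 2 (halfTrace N ρ a l) 0 =
      -((∑ i, l i * ρ i) * (∑ i, l i / a i)) := by
  set L : List (ℝ × ℝ × ℝ) := List.ofFn (fun i => (ρ i, a i, l i)) with hL
  have hpos : ∀ q ∈ L, 0 < q.1 ∧ 0 < q.2.1 := by
    intro q hq
    rw [hL, List.mem_ofFn] at hq
    obtain ⟨i, rfl⟩ := hq
    exact ⟨hρ i, ha i⟩
  -- re-express `halfTrace` via `Pl`
  have hfun : halfTrace N ρ a l = fun ω => (1/2) * Matrix.trace (Pl (L.map lay) ω) := by
    funext ω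
    have hPl : Pl (L.map lay) ω =
        (List.ofFn fun i => Am (lay (ρ i, a i, l i)).1 (lay (ρ i, a i, l i)).2 ω).prod := by
      rw [Pl, hL, List.map_ofFn, List.map_ofFn]
      rfl
    rcases eq_or_ne ω 0 with rfl | hω
    · have e1 : (List.ofFn fun i => layerT (ρ i) (a i) (l i) (0:ℝ)).prod = 1 :=
        List.prod_eq_one fun x hx => by
          obtain ⟨i, rfl⟩ := List.mem_ofFn.1 hx
          exact layerT_zero _ _ _
      have e2 : (List.ofFn fun i =>
          Am (lay (ρ i, a i, l i)).1 (lay (ρ i, a i, l i)).2 (0:ℝ)).prod = 1 :=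
        List.prod_eq_one fun x hx => by
          obtain ⟨i, rfl⟩ := List.mem_ofFn.1 hx
          exact Am_zero _ _
      rw [halfTrace, hPl, e1, e2]
    · rw [halfTrace, hPl]
      congr 1
      have hlist : (List.ofFn fun i => layerT (ρ i) (a i) (l i) ω) =
          (List.ofFn fun i =>
            Am (lay (ρ i, a i, l i)).1 (lay (ρ i, a i, l i)).2 ω).map
              (fun X => Dm ω * X * Dm ω⁻¹) := by
        rw [List.map_ofFn]
        exact congrArg List.ofFn (funext fun i => layerT_conj (ρ i) (a i) (l i) ω hω)
      rw [hlist, conj_prod _ _ (Dm_mul_Dm_inv ω hω) (Dm_inv_mul_Dm ω hω),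
        trace_conj _ _ _ (Dm_inv_mul_Dm ω hω)]
  -- first derivative
  have hder1 : ∀ ω, HasDerivAt (fun ω => (1/2 : ℝ) * Matrix.trace (Pl (L.map lay) ω))
      ((1/2 : ℝ) * Matrix.trace (DPl (L.map lay) ω)) ω := fun ω =>
    (hasDerivAt_trace (hasDerivAt_Pl (L.map lay) ω)).const_mul (1/2 : ℝ)
  have hg : deriv (halfTrace N ρ a l) =
      fun ω => (1/2 : ℝ) * Matrix.trace (DPl (L.map lay) ω) := by
    rw [hfun]
    funext ω
    exact (hder1 ω).deriv
  -- second derivative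
  have hder2 : HasDerivAt (fun ω => (1/2 : ℝ) * Matrix.trace (DPl (L.map lay) ω))
      ((1/2 : ℝ) * Matrix.trace (El (L.map lay))) 0 :=
    (hasDerivAt_trace (hasDerivAt_DPl_zero (L.map lay))).const_mul (1/2 : ℝ)
  have h2 : iteratedDeriv 2 (halfTrace N ρ a l) 0 =
      deriv (deriv (halfTrace N ρ a l)) 0 := by
    rw [iteratedDeriv_succ, iteratedDeriv_one]
  rw [h2, hg, hder2.deriv, trace_El L hpos]
  have hX : Xl L = ∑ i, l i * ρ i := by
    rw [hL, Xl, List.map_ofFn, List.sum_ofFn]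
    rfl
  have hY : Yl L = ∑ i, l i / a i := by
    rw [hL, Yl, List.map_ofFn, List.sum_ofFn]
    rfl
  rw [hX, hY]
  ring

end HalfTraceAux

/-- the second derivative of the half-trace function at the origin is
minus the curvature `κ = (Σᵢ lᵢρᵢ)(Σᵢ lᵢ/aᵢ)`. -/
theorem halfTrace_iteratedDeriv_two (N : ℕ) (hN : 1 ≤ N) (ρ a l : Fin N → ℝ)
    (hρ : ∀ i, 0 < ρ i) (ha : ∀ i, 0 < a i) (hl : ∀ i, 0 < l i) :
    iteratedDeriv 2 (halfTrace N ρ a l) 0 =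
      -((∑ i, l i * ρ i) * (∑ i, l i / a i)) := by
  exact HalfTraceAux.key N ρ a l hρ ha hl
end

section
/- Let N ≥ 1, let ρ, a : Fin N → ℝ have all entries positive, and let L > 0. Work in EuclideanSpace ℝ (Fin N), write a⁻¹ for the vector with entries 1/a_i, and set v = (1/‖ρ‖) • ρ + (1/‖a⁻¹‖) • a⁻¹ and l* = (L/‖v‖) • v. Then: (i) ‖l*‖ = L; (ii) for every l ∈ EuclideanSpace ℝ (Fin N) with ‖l‖ = L, (Σ_i l_i*ρ_i)*(Σ_i l_i/a_i) ≤ (Σ_i l*_i*ρ_i)*(Σ_i l*_i/a_i); and (iii) the maximum value is (Σ_i l*_i*ρ_i)*(Σ_i l*_i/a_i) = L² * ‖ρ‖ * ‖a⁻¹‖ * (1 + ⟪ρ/‖ρ‖, a⁻¹/‖a⁻¹‖⟫)/2. -/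
open RealInnerProductSpace

lemma aux_bound (r s c u L x y : ℝ) (hr : 0 < r) (hs : 0 < s)
    (hu2 : u ^ 2 * (r * s) = 2 * r * s + 2 * c)
    (hsq : (s * x + r * y) ^ 2 ≤ (r * s) ^ 2 * (L ^ 2 * u ^ 2)) :
    x * y ≤ L ^ 2 * (r * s + c) / 2 := by
  have e : (r * s) ^ 2 * (L ^ 2 * u ^ 2) = 4 * (r * s) * (L ^ 2 * (r * s + c) / 2) := by
    linear_combination r * s * L ^ 2 * hu2
  have h1 : 4 * (r * s) * (x * y) ≤ (s * x + r * y) ^ 2 := by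
    nlinarith [sq_nonneg (s * x - r * y)]
  have h3 : 4 * (r * s) * (x * y) ≤ 4 * (r * s) * (L ^ 2 * (r * s + c) / 2) := by
    rw [e] at hsq; linarith
  exact le_of_mul_le_mul_left h3 (by positivity)

lemma aux_kstar (r s c u L : ℝ) (hr : r ≠ 0) (hs : s ≠ 0) (hu : u ≠ 0)
    (hu2 : u ^ 2 * (r * s) = 2 * r * s + 2 * c) :
    (L / u * (r + c / s)) * (L / u * (s + c / r)) = L ^ 2 * (r * s + c) / 2 := by
  field_simp
  ring_nf
  linear_combination (-(L ^ 2 * (c + r * s))) * hu2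

set_option maxHeartbeats 1000000 in
/-- optimal thickness vector. Given positive densities `ρ` and stiffnesses
`a` and a prescribed norm `L > 0`, the vector `l* = (L/‖v‖) • v` with
`v = ρ/‖ρ‖ + a⁻¹/‖a⁻¹‖` has norm `L`, maximizes `κ(l) = (Σᵢ lᵢρᵢ)(Σᵢ lᵢ/aᵢ)` among all
`l` with `‖l‖ = L`, and the maximum value is `L² ‖ρ‖ ‖a⁻¹‖ (1 + ⟪ρ̂, â⁻¹⟫)/2`. -/
theorem optimal_thickness (N : ℕ) (hN : 1 ≤ N) (ρ a : EuclideanSpace ℝ (Fin N))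
    (hρ : ∀ i, 0 < ρ i) (ha : ∀ i, 0 < a i) (L : ℝ) (hL : 0 < L)
    (ainv v lstar : EuclideanSpace ℝ (Fin N))
    (hainv : ainv = fun i => 1 / a i)
    (hv : v = (1/‖ρ‖) • ρ + (1/‖ainv‖) • ainv)
    (hlstar : lstar = (L/‖v‖) • v) :
    ‖lstar‖ = L ∧
    (∀ l : EuclideanSpace ℝ (Fin N), ‖l‖ = L →
      (∑ i, l i * ρ i) * (∑ i, l i / a i) ≤
        (∑ i, lstar i * ρ i) * (∑ i, lstar i / a i)) ∧
    (∑ i, lstar i * ρ i) * (∑ i, lstar i / a i) =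
      L^2 * ‖ρ‖ * ‖ainv‖ * ((1 + ⟪(1/‖ρ‖) • ρ, (1/‖ainv‖) • ainv⟫) / 2) := by
  have hinner : ∀ (x w : EuclideanSpace ℝ (Fin N)), ⟪x, w⟫ = ∑ i, x i * w i := by
    intro x w
    simp [PiLp.inner_apply, RCLike.inner_apply, conj_trivial]; exact Finset.sum_congr rfl fun i _ => mul_comm _ _
  have i0 : Fin N := ⟨0, hN⟩
  have hρne : ρ ≠ 0 := fun h => (hρ i0).ne' (by simp [h])
  have hainvi : ∀ i, 0 < ainv i := by
    intro i; simp only [hainv]; exact div_pos one_pos (ha i)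
  have hainvne : ainv ≠ 0 := fun h => (hainvi i0).ne' (by simp [h])
  set r := ‖ρ‖ with hr
  set s := ‖ainv‖ with hs
  have hr0 : 0 < r := norm_pos_iff.mpr hρne
  have hs0 : 0 < s := norm_pos_iff.mpr hainvne
  set c := ⟪ρ, ainv⟫ with hcdef
  have hc0 : 0 < c := by
    rw [hcdef, hinner]
    exact Finset.sum_pos (fun i _ => mul_pos (hρ i) (hainvi i))
      (Finset.univ_nonempty_iff.mpr ⟨i0⟩)
  have hcomm : ⟪ainv, ρ⟫ = c := by rw [hcdef]; exact real_inner_comm ρ ainv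
  have hvρ : ⟪v, ρ⟫ = r + c / s := by
    rw [hv, inner_add_left, real_inner_smul_left, real_inner_smul_left,
        real_inner_self_eq_norm_sq, hcomm, ← hr]
    field_simp
  have hvainv : ⟪v, ainv⟫ = s + c / r := by
    rw [hv, inner_add_left, real_inner_smul_left, real_inner_smul_left,
        real_inner_self_eq_norm_sq, ← hcdef, ← hs]
    field_simp
    ring
  set u := ‖v‖ with hu
  have hAB : ⟪(1/r : ℝ) • ρ, (1/s : ℝ) • ainv⟫ = c / (r * s) := by
    rw [real_inner_smul_left, real_inner_smul_right, ← hcdef]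
    field_simp
  have hAA : ⟪(1/r : ℝ) • ρ, (1/r : ℝ) • ρ⟫ = 1 := by
    rw [real_inner_smul_left, real_inner_smul_right, real_inner_self_eq_norm_sq, ← hr]
    field_simp
  have hBB : ⟪(1/s : ℝ) • ainv, (1/s : ℝ) • ainv⟫ = 1 := by
    rw [real_inner_smul_left, real_inner_smul_right, real_inner_self_eq_norm_sq, ← hs]
    field_simp
  have hvv : u ^ 2 = 2 + 2 * c / (r * s) := by
    rw [hu, ← real_inner_self_eq_norm_sq, hv, real_inner_add_add_self, hAA, hBB, hAB]
    ring
  have hu0 : 0 < u := by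
    have h2 : 0 < u ^ 2 := by rw [hvv]; positivity
    nlinarith [norm_nonneg v]
  have hu2 : u ^ 2 * (r * s) = 2 * r * s + 2 * c := by
    rw [hvv]; field_simp
  have hnorm : ‖lstar‖ = L := by
    rw [hlstar, norm_smul, Real.norm_eq_abs, abs_of_pos (by positivity), ← hu]
    field_simp
  have hyr : ∀ w : EuclideanSpace ℝ (Fin N), (∑ i, w i / a i) = ⟪w, ainv⟫ := by
    intro w
    rw [hinner w ainv]
    refine Finset.sum_congr rfl fun i _ => ?_
    rw [hainv]; simp [div_eq_mul_inv]
  have hkstar : ⟪lstar, ρ⟫ * ⟪lstar, ainv⟫ = L ^ 2 * (r * s + c) / 2 := by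
    rw [hlstar, real_inner_smul_left, real_inner_smul_left, hvρ, hvainv]
    exact aux_kstar r s c u L hr0.ne' hs0.ne' hu0.ne' hu2
  refine ⟨hnorm, ?_, ?_⟩
  · intro l hl
    rw [← hinner l ρ, hyr l, ← hinner lstar ρ, hyr lstar, hkstar]
    set x := ⟪l, ρ⟫ with hx
    set y := ⟪l, ainv⟫ with hy
    have hlv : ⟪l, v⟫ = (1/r) * x + (1/s) * y := by
      rw [hv, inner_add_right, real_inner_smul_right, real_inner_smul_right, ← hx, ← hy]
    have hxy : s * x + r * y = r * s * ⟪l, v⟫ := by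
      rw [hlv]; field_simp
    have hcs : |⟪l, v⟫| ≤ L * u := by
      have := abs_real_inner_le_norm l v
      rwa [hl, ← hu] at this
    have hsq : ⟪l, v⟫ ^ 2 ≤ L ^ 2 * u ^ 2 := by
      have h1 : ⟪l, v⟫ ^ 2 ≤ (L * u) ^ 2 := by
        rw [← sq_abs]
        exact pow_le_pow_left₀ (abs_nonneg _) hcs 2
      nlinarith
    have hsq2 : (s * x + r * y) ^ 2 ≤ (r * s) ^ 2 * (L ^ 2 * u ^ 2) := by
      rw [hxy, mul_pow]
      exact mul_le_mul_of_nonneg_left hsq (by positivity)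
    exact aux_bound r s c u L x y hr0 hs0 hu2 hsq2
  · rw [← hinner lstar ρ, hyr lstar, hkstar, hAB]
    field_simp
end
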